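/- Approximate stationarity at inner termination (Proposition 4.1(b), second part): fix γ > 0, ε > 0 and an iterate z ∈ X. For each scenario s take a subproblem solution (x^s, y^s, c^s) at z with parameter γ, form the surrogates ê_s(x) = ‖x‖²/(2γ) − ( ‖z‖²/(2γ) − e_γψ_s(z) ) − ⟨ x^s/γ + c^s, x − z ⟩, and let x⁺ minimize φ(x) + (1/S) Σ_{s=1}^S ê_s(x) over X. If ‖x⁺ − z‖ ≤ ε γ, then there exist vectors a^s ∈ ∂₁ψ̄_s(x^s, z) (subgradients at x^s of the convex function ψ̄_s(·,z) on X̄), n^s ∈ N_{X̄}(x^s), u ∈ ∂φ(x⁺), and w ∈ N_X(x⁺), such that ‖ (1/S) Σ_{s=1}^S ( a^s − c^s + n^s ) + u + w ‖ ≤ ε. -/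

import Mathlib

open scoped RealInnerProductSpace

lemma aux_le {D K : ℝ} (hK : 0 ≤ K) (h : ∀ t : ℝ, 0 < t → t ≤ 1 → D ≤ t * K) : D ≤ 0 := by
  by_contra hD
  push_neg at hD
  have hK1 : (0:ℝ) < K + 1 := by linarith
  have ht : 0 < D / (K + 1) := div_pos hD hK1
  have h1 : 0 < min 1 (D / (K+1)) := lt_min one_pos ht
  have h2 := h _ h1 (min_le_left _ _)
  have h3 : min 1 (D / (K+1)) * K ≤ (D/(K+1)) * K :=
    mul_le_mul_of_nonneg_right (min_le_right _ _) hK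
  have h4 : (D/(K+1))*K < D := by
    rw [div_mul_eq_mul_div, div_lt_iff₀ hK1]; nlinarith
  linarith

lemma exists_subgrad_normal {n : ℕ} (h : EuclideanSpace ℝ (Fin n) → ℝ)
    (hconv : ConvexOn ℝ Set.univ h) (X : Set (EuclideanSpace ℝ (Fin n)))
    (hX : Convex ℝ X) (x₀ : EuclideanSpace ℝ (Fin n)) (hx₀ : x₀ ∈ X)
    (hmin : ∀ x ∈ X, h x₀ ≤ h x) :
    ∃ u : EuclideanSpace ℝ (Fin n),
      (∀ x', h x₀ + ⟪u, x' - x₀⟫ ≤ h x') ∧ (∀ x ∈ X, ⟪-u, x - x₀⟫ ≤ 0) := by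
  classical
  have hcont : Continuous h := by
    rw [← continuousOn_univ]
    exact hconv.continuousOn isOpen_univ
  set A : Set (EuclideanSpace ℝ (Fin n) × ℝ) := {p | h p.1 < p.2} with hA
  set B : Set (EuclideanSpace ℝ (Fin n) × ℝ) := X ×ˢ Set.Iic (h x₀) with hB
  have hAconv : Convex ℝ A := by
    have h2 := hconv.convex_strict_epigraph
    convert h2 using 1
    ext p; simp [hA]
  have hAopen : IsOpen A := isOpen_lt (hcont.comp continuous_fst) continuous_snd
  have hBconv : Convex ℝ B := hX.prod (convex_Iic _)
  have hdisj : Disjoint A B := by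
    rw [Set.disjoint_left]
    rintro ⟨x, r⟩ haa hbb
    simp only [hA, Set.mem_setOf_eq] at haa
    rw [hB, Set.mem_prod] at hbb
    obtain ⟨hx, hr⟩ := hbb
    have := hmin x hx
    simp only [Set.mem_Iic] at hr
    linarith
  obtain ⟨F, s, hFA, hFB⟩ := geometric_hahn_banach_open hAconv hAopen hBconv hdisj
  set c : ℝ := F (0, 1) with hc
  have hdecomp : ∀ (x : EuclideanSpace ℝ (Fin n)) (r : ℝ), F (x, r) = F (x, 0) + r * c := by
    intro x r
    have hxr : (x, r) = (x, (0:ℝ)) + r • ((0:EuclideanSpace ℝ (Fin n)), (1:ℝ)) := by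
      simp [Prod.ext_iff]
    rw [hxr, map_add, map_smul]
    simp [hc, smul_eq_mul]
  have hBx₀ : (x₀, h x₀) ∈ B := by rw [hB, Set.mem_prod]; exact ⟨hx₀, Set.mem_Iic.2 le_rfl⟩
  have hsB := hFB _ hBx₀
  rw [hdecomp] at hsB
  have hcneg : c < 0 := by
    have h1 := hFA (x₀, h x₀ + 1) (by simp only [hA, Set.mem_setOf_eq]; linarith)
    rw [hdecomp] at h1
    linarith
  have hglob : ∀ x' : EuclideanSpace ℝ (Fin n), F (x', 0) + h x' * c ≤ s := by
    intro x'
    have key : ∀ t : ℝ, 0 < t → t ≤ 1 → (F (x', 0) + h x' * c - s) ≤ t * (-c) := by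
      intro t ht _
      have h7 := hFA (x', h x' + t) (by simp only [hA, Set.mem_setOf_eq]; linarith)
      rw [hdecomp] at h7
      nlinarith
    have := aux_le (by linarith : (0:ℝ) ≤ -c) key
    linarith
  set L : EuclideanSpace ℝ (Fin n) →L[ℝ] ℝ :=
    F.comp (ContinuousLinearMap.inl ℝ (EuclideanSpace ℝ (Fin n)) ℝ) with hL
  have hLval : ∀ x : EuclideanSpace ℝ (Fin n), L x = F (x, 0) := fun x => rfl
  set v : EuclideanSpace ℝ (Fin n) :=
    (InnerProductSpace.toDual ℝ (EuclideanSpace ℝ (Fin n))).symm L with hv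
  have hvL : ∀ x : EuclideanSpace ℝ (Fin n), ⟪v, x⟫ = L x :=
    fun x => InnerProductSpace.toDual_symm_apply
  refine ⟨(-1/c) • v, ?_, ?_⟩
  · intro x'
    have key : F (x', 0) + h x' * c ≤ F (x₀, 0) + h x₀ * c := le_trans (hglob x') hsB
    rw [real_inner_smul_left, hvL, map_sub, hLval, hLval]
    have h5 : (-1) * (F (x', 0) - F (x₀, 0)) / c ≤ h x' - h x₀ := by
      rw [div_le_iff_of_neg hcneg]
      nlinarith
    have h6 : -1/c * (F (x', 0) - F (x₀, 0)) = -1 * (F (x', 0) - F (x₀, 0)) / c := by ring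
    rw [h6]
    linarith
  · intro x hx
    have hBx : (x, h x₀) ∈ B := by rw [hB, Set.mem_prod]; exact ⟨hx, Set.mem_Iic.2 le_rfl⟩
    have h1 := hFB _ hBx
    rw [hdecomp] at h1
    have h2 : F (x₀, 0) + h x₀ * c ≤ s := hglob x₀
    have h3 : F (x₀, 0) ≤ F (x, 0) := by linarith
    rw [inner_neg_left, real_inner_smul_left, hvL, map_sub, hLval, hLval]
    have hcinv : (0:ℝ) < -1/c := div_pos_of_neg_of_neg (by norm_num) hcneg
    nlinarith [mul_nonneg hcinv.le (sub_nonneg.2 h3)]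

/-- The partial Moreau envelope of the recourse function:
`e_γψ(z) = inf { f(z,y) + ‖x - z‖²/(2γ) : x ∈ X̄, G(x,y) ≤ 0 }`. -/
noncomputable def penv {n₁ n₂ ℓ : ℕ}
    (Xb : Set (EuclideanSpace ℝ (Fin n₁)))
    (f : EuclideanSpace ℝ (Fin n₁) → EuclideanSpace ℝ (Fin n₂) → ℝ)
    (G : EuclideanSpace ℝ (Fin n₁) → EuclideanSpace ℝ (Fin n₂) → Fin ℓ → ℝ)
    (γ : ℝ) (z : EuclideanSpace ℝ (Fin n₁)) : ℝ :=
  sInf {v : ℝ | ∃ x ∈ Xb, ∃ y : EuclideanSpace ℝ (Fin n₂),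
    (∀ i, G x y i ≤ 0) ∧ v = f z y + ‖x - z‖ ^ 2 / (2 * γ)}

set_option maxHeartbeats 1000000 in
theorem stmt10 {n₁ n₂ ℓ S : ℕ} (hS : 0 < S)
    (φ : EuclideanSpace ℝ (Fin n₁) → ℝ) (hφ : ConvexOn ℝ Set.univ φ)
    (X Xb : Set (EuclideanSpace ℝ (Fin n₁)))
    (hXne : X.Nonempty) (hXconv : Convex ℝ X) (hXcomp : IsCompact X)
    (hXbne : Xb.Nonempty) (hXbconv : Convex ℝ Xb) (hXbcomp : IsCompact Xb)
    (hXint : X ⊆ interior Xb)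
    (f : Fin S → EuclideanSpace ℝ (Fin n₁) → EuclideanSpace ℝ (Fin n₂) → ℝ)
    (hfconc : ∀ s y, ConcaveOn ℝ Set.univ (fun x => f s x y))
    (hfconv : ∀ s x, ConvexOn ℝ Set.univ (fun y => f s x y))
    (G : Fin S → EuclideanSpace ℝ (Fin n₁) → EuclideanSpace ℝ (Fin n₂) → Fin ℓ → ℝ)
    (hG : ∀ s i, ConvexOn ℝ Set.univ
      (fun p : EuclideanSpace ℝ (Fin n₁) × EuclideanSpace ℝ (Fin n₂) => G s p.1 p.2 i))
    (ψb : Fin S → EuclideanSpace ℝ (Fin n₁) → EuclideanSpace ℝ (Fin n₁) → ℝ)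
    (hA : ∀ s, ∀ x ∈ Xb, ∀ z ∈ Xb, ∃ y : EuclideanSpace ℝ (Fin n₂),
      (∀ i, G s x y i ≤ 0) ∧ ψb s x z = f s z y ∧
      ∀ y' : EuclideanSpace ℝ (Fin n₂), (∀ i, G s x y' i ≤ 0) → ψb s x z ≤ f s z y')
    (κ : Fin S → ℝ) (hκ : ∀ s, 0 ≤ κ s)
    (hB : ∀ s, ∀ z ∈ X, ∀ x₁ ∈ Xb, ∀ x₂ ∈ Xb,
      |ψb s x₁ z - ψb s x₂ z| ≤ κ s * ‖x₁ - x₂‖)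
    (γ ε : ℝ) (hγ : 0 < γ) (hε : 0 < ε)
    (z : EuclideanSpace ℝ (Fin n₁)) (hz : z ∈ X)
    (xs : Fin S → EuclideanSpace ℝ (Fin n₁))
    (ys : Fin S → EuclideanSpace ℝ (Fin n₂))
    (cs : Fin S → EuclideanSpace ℝ (Fin n₁))
    (hxs : ∀ s, xs s ∈ Xb)
    (hfeas : ∀ s i, G s (xs s) (ys s) i ≤ 0)
    (hmin : ∀ s, ∀ x ∈ Xb, ∀ y : EuclideanSpace ℝ (Fin n₂), (∀ i, G s x y i ≤ 0) →
      f s z (ys s) + ‖xs s - z‖ ^ 2 / (2 * γ) ≤ f s z y + ‖x - z‖ ^ 2 / (2 * γ))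
    (hc : ∀ s, ∀ z' : EuclideanSpace ℝ (Fin n₁),
      -f s z' (ys s) ≥ -f s z (ys s) + ⟪cs s, z' - z⟫)
    (xplus : EuclideanSpace ℝ (Fin n₁)) (hxplusX : xplus ∈ X)
    (hxplus : ∀ x ∈ X,
      φ xplus + (1 / (S : ℝ)) * ∑ s : Fin S,
        (‖xplus‖ ^ 2 / (2 * γ) - (‖z‖ ^ 2 / (2 * γ) - penv Xb (f s) (G s) γ z)
          - ⟪(1 / γ) • xs s + cs s, xplus - z⟫)
      ≤ φ x + (1 / (S : ℝ)) * ∑ s : Fin S,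
        (‖x‖ ^ 2 / (2 * γ) - (‖z‖ ^ 2 / (2 * γ) - penv Xb (f s) (G s) γ z)
          - ⟪(1 / γ) • xs s + cs s, x - z⟫))
    (hstop : ‖xplus - z‖ ≤ ε * γ) :
    ∃ (a nn : Fin S → EuclideanSpace ℝ (Fin n₁)) (u w : EuclideanSpace ℝ (Fin n₁)),
      (∀ s, ∀ x' ∈ Xb, ψb s x' z ≥ ψb s (xs s) z + ⟪a s, x' - xs s⟫) ∧
      (∀ s, ∀ x ∈ Xb, ⟪nn s, x - xs s⟫ ≤ 0) ∧
      (∀ x' : EuclideanSpace ℝ (Fin n₁), φ x' ≥ φ xplus + ⟪u, x' - xplus⟫) ∧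
      (∀ x ∈ X, ⟪w, x - xplus⟫ ≤ 0) ∧
      ‖(1 / (S : ℝ)) • (∑ s : Fin S, (a s - cs s + nn s)) + u + w‖ ≤ ε := by
  have hγne : γ ≠ 0 := hγ.ne'
  have hSne : (S : ℝ) ≠ 0 := Nat.cast_ne_zero.2 hS.ne'
  have hzXb : z ∈ Xb := interior_subset (hXint hz)
  -- Part A : per-scenario subgradient inequality
  have key1 : ∀ s : Fin S, ∀ x' ∈ Xb,
      ψb s (xs s) z + ⟪(1/γ) • (z - xs s), x' - xs s⟫ ≤ ψb s x' z := by
    intro s x' hx'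
    obtain ⟨y', hy'feas, hy'eq, _⟩ := hA s x' hx' z hzXb
    obtain ⟨yh, hyhfeas, hyheq, hyhmin⟩ := hA s (xs s) (hxs s) z hzXb
    have hpsixs : ψb s (xs s) z ≤ f s z (ys s) := hyhmin _ (hfeas s)
    have hD : f s z (ys s) + ⟪(1/γ) • (z - xs s), x' - xs s⟫ - ψb s x' z ≤ 0 := by
      apply aux_le (K := ‖x' - xs s‖^2/(2*γ)) (by positivity)
      intro t ht ht1
      set xt := (1-t) • xs s + t • x' with hxt
      set yt := (1-t) • ys s + t • y' with hyt
      have hxtXb : xt ∈ Xb := hXbconv (hxs s) hx' (by linarith) ht.le (by ring)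
      have hytfeas : ∀ i, G s xt yt i ≤ 0 := by
        intro i
        have hcomb := (hG s i).2 (Set.mem_univ ((xs s, ys s) :
            EuclideanSpace ℝ (Fin n₁) × EuclideanSpace ℝ (Fin n₂)))
          (Set.mem_univ (x', y')) (by linarith : (0:ℝ) ≤ 1 - t) ht.le (by ring)
        simp only [Prod.smul_mk, Prod.mk_add_mk] at hcomb
        have h1 : (0:ℝ) ≤ (1-t) * (-(G s (xs s) (ys s) i)) :=
          mul_nonneg (by linarith) (by linarith [hfeas s i])
        have h2 : (0:ℝ) ≤ t * (-(G s x' y' i)) :=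
          mul_nonneg ht.le (by linarith [hy'feas i])
        rw [smul_eq_mul, smul_eq_mul] at hcomb
        show G s ((1-t) • xs s + t • x') ((1-t) • ys s + t • y') i ≤ 0
        nlinarith [hcomb]
      have hA1 := hmin s xt hxtXb yt hytfeas
      have hA3 : f s z yt ≤ (1-t) * f s z (ys s) + t * f s z y' :=
        (hfconv s z).2 (Set.mem_univ (ys s)) (Set.mem_univ y')
          (by linarith) ht.le (by ring)
      have hNT : ‖xt - z‖^2 = ‖xs s - z‖^2 + 2*(t*⟪xs s - z, x' - xs s⟫)
          + t^2*‖x' - xs s‖^2 := by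
        have e1 : xt - z = (xs s - z) + t • (x' - xs s) := by rw [hxt]; module
        rw [e1, norm_add_sq_real, real_inner_smul_right, norm_smul,
          Real.norm_eq_abs, abs_of_pos ht]
        ring
      have hip : ⟪(1/γ) • (z - xs s), x' - xs s⟫ = -(⟪xs s - z, x' - xs s⟫/γ) := by
        rw [real_inner_smul_left, show z - xs s = -(xs s - z) by abel, inner_neg_left]
        ring
      set F0 := f s z (ys s)
      set FT := f s z yt
      set P := ψb s x' z
      set II := ⟪xs s - z, x' - xs s⟫
      set M := ‖x' - xs s‖^2
      have e2 : (‖xs s - z‖^2 + 2*(t*II) + t^2*M)/(2*γ) - ‖xs s - z‖^2/(2*γ)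
          = t*(II/γ + t*(M/(2*γ))) := by field_simp; ring
      have step0 : F0 - FT ≤ t*(II/γ + t*(M/(2*γ))) := by
        rw [hNT] at hA1; linarith
      have step1 : t*(F0 - P) ≤ t*(II/γ + t*(M/(2*γ))) := by
        rw [hy'eq] at *
        nlinarith [step0, hA3]
      have step2 : F0 - P ≤ II/γ + t*(M/(2*γ)) := by
        have := (mul_le_mul_iff_right₀ ht).mp step1
        linarith
      rw [hip]
      linarith
    linarith
  -- Part B : surrogate master problem optimality
  set bbar : EuclideanSpace ℝ (Fin n₁) :=
    (1/(S:ℝ)) • ∑ s : Fin S, ((1/γ) • xs s + cs s) with hbbar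
  set g : EuclideanSpace ℝ (Fin n₁) := (1/γ) • xplus - bbar with hg
  have hsum : ∀ x : EuclideanSpace ℝ (Fin n₁),
      (1/(S:ℝ)) * ∑ s : Fin S, (‖x‖^2/(2*γ) - (‖z‖^2/(2*γ) - penv Xb (f s) (G s) γ z)
          - ⟪(1/γ) • xs s + cs s, x - z⟫)
      = ‖x‖^2/(2*γ)
        - (1/(S:ℝ)) * ∑ s : Fin S, (‖z‖^2/(2*γ) - penv Xb (f s) (G s) γ z)
        - ⟪bbar, x - z⟫ := by
    intro x
    rw [Finset.sum_sub_distrib, Finset.sum_sub_distrib, ← sum_inner,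
      Finset.sum_const, Finset.card_univ, Fintype.card_fin, nsmul_eq_mul,
      mul_sub, mul_sub, hbbar, real_inner_smul_left]
    congr 2
    field_simp
  have hq1 : ∀ x ∈ X, ⟪-g, x - xplus⟫ - ‖x - xplus‖^2/(2*γ) ≤ φ x - φ xplus := by
    intro x hx
    have h0 := hxplus x hx
    rw [hsum x, hsum xplus] at h0
    have hnx : ‖x‖^2 = ‖xplus‖^2 + 2*⟪xplus, x - xplus⟫ + ‖x - xplus‖^2 := by
      have e1 : x = xplus + (x - xplus) := by abel
      nth_rewrite 1 [e1]
      rw [norm_add_sq_real]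
    have hinn : ⟪bbar, x - z⟫ - ⟪bbar, xplus - z⟫ = ⟪bbar, x - xplus⟫ := by
      rw [← inner_sub_right]
      congr 1
      abel
    have hgi : ⟪-g, x - xplus⟫ = -((1/γ)*⟪xplus, x - xplus⟫) + ⟪bbar, x - xplus⟫ := by
      rw [hg, inner_neg_left, inner_sub_left, real_inner_smul_left]
      ring
    have e2 : (‖xplus‖^2 + 2*⟪xplus, x - xplus⟫ + ‖x - xplus‖^2)/(2*γ)
        - ‖xplus‖^2/(2*γ) = ⟪xplus, x - xplus⟫/γ + ‖x - xplus‖^2/(2*γ) := by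
      field_simp; ring
    rw [hgi]
    rw [hnx] at h0
    have : -((1/γ)*⟪xplus, x - xplus⟫) = -(⟪xplus, x - xplus⟫/γ) := by ring
    rw [this]
    linarith
  have hq : ∀ x ∈ X, φ xplus + ⟪g, xplus⟫ ≤ φ x + ⟪g, x⟫ := by
    intro x hx
    have hD : ⟪-g, x - xplus⟫ - (φ x - φ xplus) ≤ 0 := by
      apply aux_le (K := ‖x - xplus‖^2/(2*γ)) (by positivity)
      intro t ht ht1
      set xt := (1-t) • xplus + t • x with hxt
      have hxtX : xt ∈ X := hXconv hxplusX hx (by linarith) ht.le (by ring)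
      have h1 := hq1 xt hxtX
      have e1 : xt - xplus = t • (x - xplus) := by rw [hxt]; module
      rw [e1, real_inner_smul_right, norm_smul, Real.norm_eq_abs, abs_of_pos ht,
        mul_pow] at h1
      have h2 : φ xt ≤ (1-t) * φ xplus + t * φ x :=
        hφ.2 (Set.mem_univ xplus) (Set.mem_univ x) (by linarith) ht.le (by ring)
      have step1 : t * (⟪-g, x - xplus⟫ - (φ x - φ xplus))
          ≤ t * (t * (‖x - xplus‖^2/(2*γ))) := by
        have e3 : t^2 * ‖x - xplus‖^2 / (2*γ) = t * (t * (‖x - xplus‖^2/(2*γ))) := by ring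
        rw [e3] at h1
        nlinarith [h1, h2]
      exact (mul_le_mul_iff_right₀ ht).mp step1
    have : ⟪-g, x - xplus⟫ = ⟪g, xplus⟫ - ⟪g, x⟫ := by
      rw [inner_neg_left, inner_sub_right]
      ring
    linarith
  have hhconv : ConvexOn ℝ Set.univ (fun x => φ x + ⟪g, x⟫) := by
    refine ⟨convex_univ, ?_⟩
    intro x _ y _ a b ha hb hab
    simp only
    have h3 := hφ.2 (Set.mem_univ x) (Set.mem_univ y) ha hb hab
    simp only [smul_eq_mul] at h3 ⊢
    rw [inner_add_right, real_inner_smul_right, real_inner_smul_right]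
    linarith
  obtain ⟨u, hu1, hu2⟩ := exists_subgrad_normal (fun x => φ x + ⟪g, x⟫) hhconv
    X hXconv xplus hxplusX hq
  refine ⟨fun s => (1/γ) • (z - xs s), fun _ => 0, u - g, -u, ?_, ?_, ?_, ?_, ?_⟩
  · intro s x' hx'
    exact key1 s x' hx'
  · intro s x _
    simp
  · intro x'
    have h1 := hu1 x'
    have h2 : ⟪g, x'⟫ - ⟪g, xplus⟫ = ⟪g, x' - xplus⟫ := by
      rw [inner_sub_right]
    have h3 : ⟪u - g, x' - xplus⟫ = ⟪u, x' - xplus⟫ - ⟪g, x' - xplus⟫ := by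
      rw [inner_sub_left]
    linarith
  · intro x hx
    exact hu2 x hx
  · have hsum2 : ∑ s : Fin S, ((1/γ) • (z - xs s) - cs s + (0:EuclideanSpace ℝ (Fin n₁)))
        = (S : ℕ) • ((1/γ) • z) - ∑ s : Fin S, ((1/γ) • xs s + cs s) := by
      rw [Finset.sum_congr rfl (fun s _ => (by module :
        (1/γ) • (z - xs s) - cs s + (0:EuclideanSpace ℝ (Fin n₁))
          = (1/γ) • z - ((1/γ) • xs s + cs s)))]
      rw [Finset.sum_sub_distrib, Finset.sum_const, Finset.card_univ, Fintype.card_fin]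
    have hcast : (1/(S:ℝ)) • ((S : ℕ) • ((1/γ) • z)) = (1/γ) • z := by
      rw [← Nat.cast_smul_eq_nsmul ℝ, smul_smul]
      rw [show (1/(S:ℝ)) * (S:ℝ) = 1 by field_simp]
      rw [one_smul]
    have hV : (1/(S:ℝ)) • (∑ s : Fin S,
        ((1/γ) • (z - xs s) - cs s + (0:EuclideanSpace ℝ (Fin n₁)))) + (u - g) + (-u)
        = (1/γ) • (z - xplus) := by
      rw [hsum2, smul_sub, hcast, hg, hbbar]
      module
    rw [hV, norm_smul, Real.norm_eq_abs, abs_of_pos (by positivity : (0:ℝ) < 1/γ),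
      norm_sub_rev]
    rw [div_mul_eq_mul_div, one_mul, div_le_iff₀ hγ]
    linarith [hstop]
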